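/- Let n ≥ 1, and fix constants Θ₀ ∈ ℝ, c > 0, α ∈ [0, 2], a nonnegative kernel K : ℝⁿ × ℝⁿ → [0, +∞), a vector field ω : ℝⁿ × ℝ → ℝⁿ, and β : ℝ → ℝ. Let u : ℝⁿ × ℝ → ℝ be twice differentiable in space and differentiable in time, and let γ : ℝⁿ⁻¹ × ℝ → ℝ be twice differentiable in space and differentiable in time, with u(x', γ(x',t), t) = Θ₀ for all x' ∈ ℝⁿ⁻¹ and t ∈ ℝ, γ(0,0) = 0, ∇_{x'} γ(0,0) = 0, and ∂_{x_n} u(0,0) > 0. Suppose u satisfies at the space-time point (0,0): ∂_t u = c Δu + ∫_{ℝⁿ} (u(y,0) − Θ₀)₊ K(0,y) dy + ((ω(0,0) − β(u(0,0)) ∇u(0,0)/|∇u(0,0)|^α) · ∇u(0,0))₋, with the integral well defined. Then the normal velocity of the level-set graph satisfies −∂_t γ(0,0) = −c H + c ∂²_{x_n x_n} u(0,0)/|∇u(0,0)| + (1/|∇u(0,0)|) ∫_{ℝⁿ} (u(y,0) − Θ₀)₊ K(0,y) dy + ((ω(0,0) − β(u(0,0)) ∇u(0,0)/|∇u(0,0)|^α)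 · ∇u(0,0)/|∇u(0,0)|)₋, where H = Δ_{x'} γ(0,0) = Σ_{k=1}^{n−1} ∂²_{x_k x_k} γ(0,0). -/

import Mathlib

open MeasureTheory

/-- Time derivative ∂_t f at a space-time point. -/
noncomputable def tder {m : ℕ} (f : ((Fin m → ℝ) × ℝ) → ℝ) (p : (Fin m → ℝ) × ℝ) : ℝ :=
  fderiv ℝ f p (0, 1)

/-- Spatial partial derivative ∂_{x_i} f at a space-time point. -/
noncomputable def pder {m : ℕ} (f : ((Fin m → ℝ) × ℝ) → ℝ) (p : (Fin m → ℝ) × ℝ)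
    (i : Fin m) : ℝ :=
  fderiv ℝ f p (Pi.single i 1, 0)

/-- Second spatial partial derivative ∂²_{x_i x_j} f at a space-time point
(space slice at fixed time). -/
noncomputable def pder2 {m : ℕ} (f : ((Fin m → ℝ) × ℝ) → ℝ) (p : (Fin m → ℝ) × ℝ)
    (i j : Fin m) : ℝ :=
  fderiv ℝ (fun x => fderiv ℝ (fun y => f (y, p.2)) x (Pi.single j 1)) p.1 (Pi.single i 1)

/-- Euclidean norm of a vector of ℝᵐ. -/
noncomputable def enorm' {m : ℕ} (v : Fin m → ℝ) : ℝ :=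
  Real.sqrt (∑ i, v i ^ 2)

section aux
variable {n : ℕ}

lemma snoc_add (v w : Fin n → ℝ) (a b : ℝ) :
    (Fin.snoc (v + w) (a + b) : Fin (n+1) → ℝ) = Fin.snoc v a + Fin.snoc w b := by
  funext i
  refine Fin.lastCases ?_ ?_ i <;> simp

lemma snoc_smul (c : ℝ) (v : Fin n → ℝ) (a : ℝ) :
    (Fin.snoc (c • v) (c * a) : Fin (n+1) → ℝ) = c • (Fin.snoc v a : Fin (n+1) → ℝ) := by
  funext i
  refine Fin.lastCases ?_ ?_ i <;> simp

/-- `snoc` as a continuous linear map. -/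
noncomputable def snocCLM (n : ℕ) : ((Fin n → ℝ) × ℝ) →L[ℝ] (Fin (n+1) → ℝ) :=
  LinearMap.toContinuousLinearMap
  { toFun := fun p => Fin.snoc p.1 p.2
    map_add' := fun p q => snoc_add p.1 q.1 p.2 q.2
    map_smul' := fun c p => snoc_smul c p.1 p.2 }

@[simp] lemma snocCLM_apply (p : (Fin n → ℝ) × ℝ) :
    snocCLM n p = Fin.snoc p.1 p.2 := rfl

lemma snoc_zero_zero : (Fin.snoc (0 : Fin n → ℝ) (0:ℝ) : Fin (n+1) → ℝ) = 0 := by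
  funext i
  refine Fin.lastCases ?_ ?_ i <;> simp

lemma snoc_single (j : Fin n) :
    (Fin.snoc (Pi.single j 1) (0:ℝ) : Fin (n+1) → ℝ) = Pi.single j.castSucc 1 := by
  funext i
  refine Fin.lastCases ?_ ?_ i
  · simp [Pi.single_apply, (Fin.castSucc_lt_last j).ne]
  · intro k
    simp [Pi.single_apply, Fin.castSucc_inj]

lemma snoc_zero_a (a : ℝ) :
    (Fin.snoc (0 : Fin n → ℝ) a : Fin (n+1) → ℝ) = a • (Pi.single (Fin.last n) 1 : Fin (n+1) → ℝ) := by
  funext i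
  refine Fin.lastCases ?_ ?_ i
  · simp
  · intro k
    simp [Pi.single_apply, (Fin.castSucc_lt_last k).ne]

lemma snoc_split (j : Fin n) (a : ℝ) :
    (Fin.snoc (Pi.single j 1) a : Fin (n+1) → ℝ)
      = (Pi.single j.castSucc 1 : Fin (n+1) → ℝ) + a • (Pi.single (Fin.last n) 1 : Fin (n+1) → ℝ) := by
  rw [← snoc_single j, ← snoc_zero_a a, ← snoc_add]
  simp

end aux

/- STATEMENT 8: normal velocity of the level-set front. If the level set {u = Θ₀}
is the graph {x_n = γ(x',t)}, with γ(0,0) = 0, ∇_{x'}γ(0,0) = 0, ∂_{x_n}u(0,0) > 0,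
and u satisfies the bushfire equation at the space-time origin, then
−∂_t γ(0,0) = −cH + c ∂²_{x_n x_n} u/|∇u| + (1/|∇u|) ∫ (u(y,0) − Θ₀)₊ K(0,y) dy
              + ((ω − β(u)∇u/|∇u|^α) · ∇u/|∇u|)₋,
where H = Δ_{x'}γ(0,0). Here ℝⁿ, n ≥ 1, is modelled as `Fin (n+1) → ℝ`;
f₊ = max 0 f and f₋ = max 0 (−f); all derivatives of u are taken at the space-time
origin (0,0). -/
theorem stmt_8 (n : ℕ) (Θ₀ c : ℝ) (hc : 0 < c) (α : ℝ) (hα : α ∈ Set.Icc (0 : ℝ) 2)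
    (K : (Fin (n + 1) → ℝ) → (Fin (n + 1) → ℝ) → ℝ) (hK : ∀ x y, 0 ≤ K x y)
    (ω : ((Fin (n + 1) → ℝ) × ℝ) → (Fin (n + 1) → ℝ)) (β : ℝ → ℝ)
    (u : ((Fin (n + 1) → ℝ) × ℝ) → ℝ) (γ : ((Fin n → ℝ) × ℝ) → ℝ)
    (hu : Differentiable ℝ u)
    (hu2 : ∀ t : ℝ, Differentiable ℝ (fderiv ℝ (fun x : Fin (n + 1) → ℝ => u (x, t))))
    (hγ : Differentiable ℝ γ)
    (hγ2 : ∀ t : ℝ, Differentiable ℝ (fderiv ℝ (fun x' : Fin n → ℝ => γ (x', t))))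
    (hlevel : ∀ (x' : Fin n → ℝ) (t : ℝ), u (Fin.snoc x' (γ (x', t)), t) = Θ₀)
    (hγ0 : γ (0, 0) = 0)
    (hgrad : ∀ j : Fin n, fderiv ℝ γ (0, 0) (Pi.single j 1, 0) = 0)
    (hn : 0 < pder u (0, 0) (Fin.last n))
    (hint : Integrable (fun y : Fin (n + 1) → ℝ => max 0 (u (y, (0 : ℝ)) - Θ₀) * K 0 y))
    (heq : tder u (0, 0)
        = c * (∑ i : Fin (n + 1), pder2 u (0, 0) i i)
          + (∫ y : Fin (n + 1) → ℝ, max 0 (u (y, (0 : ℝ)) - Θ₀) * K 0 y)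
          + max 0 (-(∑ i : Fin (n + 1),
              (ω (0, 0) i
                  - β (u (0, 0)) * pder u (0, 0) i
                      / (enorm' (fun k => pder u (0, 0) k)) ^ α)
                * pder u (0, 0) i))) :
    -(tder γ (0, 0))
      = -(c * (∑ k : Fin n, pder2 γ (0, 0) k k))
        + c * pder2 u (0, 0) (Fin.last n) (Fin.last n)
            / enorm' (fun k => pder u (0, 0) k)
        + (1 / enorm' (fun k => pder u (0, 0) k))
            * (∫ y : Fin (n + 1) → ℝ, max 0 (u (y, (0 : ℝ)) - Θ₀) * K 0 y)
        + max 0 (-(∑ i : Fin (n + 1),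
            (ω (0, 0) i
                - β (u (0, 0)) * pder u (0, 0) i
                    / (enorm' (fun k => pder u (0, 0) k)) ^ α)
              * (pder u (0, 0) i / enorm' (fun k => pder u (0, 0) k)))) := by
  classical
  set N := pder u (0, 0) (Fin.last n) with hN
  -- the full derivative of γ at the origin
  set Dγ : ((Fin n → ℝ) × ℝ) →L[ℝ] ℝ := fderiv ℝ γ (0, 0) with hDγ
  -- the space-time map F q = (snoc q.1 (γ q), q.2)
  have hF : HasFDerivAt (fun q : (Fin n → ℝ) × ℝ => ((Fin.snoc q.1 (γ q) : Fin (n+1) → ℝ), q.2))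
      (((snocCLM n).comp ((ContinuousLinearMap.fst ℝ (Fin n → ℝ) ℝ).prod Dγ)).prod
        (ContinuousLinearMap.snd ℝ (Fin n → ℝ) ℝ)) (0, 0) := by
    have h1 : HasFDerivAt (fun q : (Fin n → ℝ) × ℝ => (q.1, γ q))
        ((ContinuousLinearMap.fst ℝ (Fin n → ℝ) ℝ).prod Dγ) (0, 0) :=
      (hasFDerivAt_fst).prodMk ((hγ (0, 0)).hasFDerivAt)
    have h2 := ((snocCLM n).hasFDerivAt (x := ((0 : Fin n → ℝ), γ (0,0)))).comp (0, 0) h1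
    exact (h2.congr_of_eventuallyEq (by filter_upwards with q; rfl)).prodMk hasFDerivAt_snd
  -- the composite u ∘ F is constant Θ₀, hence has derivative 0
  have hzero :
      (fderiv ℝ u (0, 0)).comp
        ((((snocCLM n).comp ((ContinuousLinearMap.fst ℝ (Fin n → ℝ) ℝ).prod Dγ)).prod
          (ContinuousLinearMap.snd ℝ (Fin n → ℝ) ℝ))) = 0 := by
    have hF00 : ((Fin.snoc (0 : Fin n → ℝ) (γ ((0 : Fin n → ℝ), (0:ℝ))) : Fin (n+1) → ℝ),
        (0:ℝ)) = ((0 : Fin (n+1) → ℝ), (0:ℝ)) := by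
      rw [hγ0, snoc_zero_zero]
    have hcomp := ((hu ((Fin.snoc (0 : Fin n → ℝ) (γ ((0 : Fin n → ℝ), (0:ℝ))) : Fin (n+1) → ℝ),
        (0:ℝ))).hasFDerivAt).comp ((0 : Fin n → ℝ), (0:ℝ)) hF
    rw [hF00] at hcomp
    have hconst : (fun q : (Fin n → ℝ) × ℝ =>
        u ((Fin.snoc q.1 (γ q) : Fin (n+1) → ℝ), q.2)) = fun _ => Θ₀ := by
      funext q
      exact hlevel q.1 q.2
    have := hcomp.congr_of_eventuallyEq (by filter_upwards with q; exact (congrFun hconst q).symm)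
    exact ((hasFDerivAt_const Θ₀ ((0 : Fin n → ℝ), (0:ℝ))).unique this).symm
  -- Step A : spatial first-order derivatives vanish
  have hA : ∀ j : Fin n, pder u (0, 0) j.castSucc = 0 := by
    intro j
    have := congrArg (fun L => L ((Pi.single j 1 : Fin n → ℝ), (0:ℝ))) hzero
    simp only [ContinuousLinearMap.comp_apply, ContinuousLinearMap.prod_apply,
      ContinuousLinearMap.coe_fst', ContinuousLinearMap.coe_snd', snocCLM_apply,
      ContinuousLinearMap.zero_apply] at this
    rw [show Dγ ((Pi.single j 1 : Fin n → ℝ), (0:ℝ)) = 0 from hgrad j, snoc_single j] at this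
    exact this
  -- Step C : time derivative relation  tder u = -N * tder γ
  have hC : tder u (0, 0) + N * tder γ (0, 0) = 0 := by
    have := congrArg (fun L => L ((0 : Fin n → ℝ), (1:ℝ))) hzero
    simp only [ContinuousLinearMap.comp_apply, ContinuousLinearMap.prod_apply,
      ContinuousLinearMap.coe_fst', ContinuousLinearMap.coe_snd', snocCLM_apply,
      ContinuousLinearMap.zero_apply] at this
    rw [snoc_zero_a] at this
    have hspl : ((Dγ ((0 : Fin n → ℝ), (1:ℝ))) • (Pi.single (Fin.last n) 1 : Fin (n+1) → ℝ), (1:ℝ))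
        = (Dγ ((0 : Fin n → ℝ), (1:ℝ))) • ((Pi.single (Fin.last n) 1 : Fin (n+1) → ℝ), (0:ℝ))
          + ((0 : Fin (n+1) → ℝ), (1:ℝ)) := by
      simp [Prod.ext_iff]
    rw [hspl, map_add, ContinuousLinearMap.map_smul] at this
    have : (Dγ ((0 : Fin n → ℝ), (1:ℝ))) * N + tder u (0, 0) = 0 := by
      simpa [tder, pder, smul_eq_mul, hN] using this
    have hDt : Dγ ((0 : Fin n → ℝ), (1:ℝ)) = tder γ (0, 0) := rfl
    rw [hDt] at this
    linarith
  -- spatial slices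
  set U : (Fin (n+1) → ℝ) → ℝ := fun x => u (x, 0) with hUdef
  set Γ : (Fin n → ℝ) → ℝ := fun x' => γ (x', 0) with hΓdef
  have hU : Differentiable ℝ U := fun x =>
    (hu ((x, 0) : (Fin (n+1) → ℝ) × ℝ)).comp x
      ((differentiable_id.prodMk (differentiable_const (0:ℝ))) x)
  have hΓd : Differentiable ℝ Γ := fun x =>
    (hγ ((x, 0) : (Fin n → ℝ) × ℝ)).comp x
      ((differentiable_id.prodMk (differentiable_const (0:ℝ))) x)
  have hUder : ∀ (x : Fin (n+1) → ℝ) (v : Fin (n+1) → ℝ),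
      fderiv ℝ U x v = fderiv ℝ u (x, 0) (v, 0) := by
    intro x v
    have h1 : HasFDerivAt (fun y : Fin (n+1) → ℝ => ((y, 0) : (Fin (n+1) → ℝ) × ℝ))
        (ContinuousLinearMap.inl ℝ (Fin (n+1) → ℝ) ℝ) x :=
      (ContinuousLinearMap.inl ℝ (Fin (n+1) → ℝ) ℝ).hasFDerivAt
    have h2 : HasFDerivAt U
        ((fderiv ℝ u (x, 0)).comp (ContinuousLinearMap.inl ℝ (Fin (n+1) → ℝ) ℝ)) x :=
      ((hu (x, 0)).hasFDerivAt).comp x h1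
    rw [h2.fderiv]
    rfl
  have hΓder : ∀ (x' : Fin n → ℝ) (v : Fin n → ℝ),
      fderiv ℝ Γ x' v = fderiv ℝ γ (x', 0) (v, 0) := by
    intro x v
    have h1 : HasFDerivAt (fun y : Fin n → ℝ => ((y, 0) : (Fin n → ℝ) × ℝ))
        (ContinuousLinearMap.inl ℝ (Fin n → ℝ) ℝ) x :=
      (ContinuousLinearMap.inl ℝ (Fin n → ℝ) ℝ).hasFDerivAt
    have h2 : HasFDerivAt Γ
        ((fderiv ℝ γ (x, 0)).comp (ContinuousLinearMap.inl ℝ (Fin n → ℝ) ℝ)) x :=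
      ((hγ (x, 0)).hasFDerivAt).comp x h1
    rw [h2.fderiv]
    rfl
  -- the spatial graph map G
  set G : (Fin n → ℝ) → (Fin (n+1) → ℝ) := fun x' => Fin.snoc x' (Γ x') with hGdef
  have hGd : ∀ x', HasFDerivAt G
      ((snocCLM n).comp ((ContinuousLinearMap.id ℝ (Fin n → ℝ)).prod (fderiv ℝ Γ x'))) x' := by
    intro x'
    have h1 : HasFDerivAt (fun y : Fin n → ℝ => (y, Γ y))
        ((ContinuousLinearMap.id ℝ (Fin n → ℝ)).prod (fderiv ℝ Γ x')) x' :=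
      (hasFDerivAt_id x').prodMk ((hΓd x').hasFDerivAt)
    exact ((snocCLM n).hasFDerivAt.comp x' h1).congr_of_eventuallyEq
      (by filter_upwards with q; rfl)
  have hG0 : G 0 = 0 := by
    simp only [hGdef, hΓdef, hγ0]
    exact snoc_zero_zero
  -- chain rule identity at every x' : the composite U ∘ G is constant
  have hslice : ∀ x' : Fin n → ℝ, ∀ j : Fin n,
      fderiv ℝ U (G x') (Fin.snoc (Pi.single j 1) (fderiv ℝ Γ x' (Pi.single j 1))) = 0 := by
    intro x' j
    have hcomp := ((hU (G x')).hasFDerivAt).comp x' (hGd x')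
    have hconst : (fun y : Fin n → ℝ => U (G y)) = fun _ => Θ₀ := by
      funext y
      exact hlevel y 0
    have hz := (hasFDerivAt_const Θ₀ x').unique
      (hcomp.congr_of_eventuallyEq (by filter_upwards with q; exact (congrFun hconst q).symm))
    have := congrArg (fun L => L (Pi.single j 1 : Fin n → ℝ)) hz.symm
    simpa using this
  -- second-order relation
  have hD : ∀ j : Fin n, pder2 u (0, 0) j.castSucc j.castSucc
      = -(N * pder2 γ (0, 0) j j) := by
    intro j
    set e : Fin (n+1) → ℝ := Pi.single j.castSucc 1 with he
    set eL : Fin (n+1) → ℝ := Pi.single (Fin.last n) 1 with heL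
    set ej : Fin n → ℝ := Pi.single j 1 with hej
    -- h x' = fderiv U (G x') e + (fderiv Γ x' ej) * (fderiv U (G x') eL) is identically 0
    have hform : ∀ x' : Fin n → ℝ,
        fderiv ℝ U (G x') e + (fderiv ℝ Γ x' ej) * (fderiv ℝ U (G x') eL) = 0 := by
      intro x'
      have := hslice x' j
      have hsp : (Fin.snoc ej (fderiv ℝ Γ x' ej) : Fin (n+1) → ℝ)
          = e + (fderiv ℝ Γ x' ej) • eL := by
        rw [he, heL, hej]
        exact snoc_split j _
      rw [hsp, map_add, ContinuousLinearMap.map_smul] at this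
      simpa [smul_eq_mul] using this
    -- differentiate hform at 0 in direction ej
    have hΨu : Differentiable ℝ (fderiv ℝ U) := hu2 0
    have hΨγ : Differentiable ℝ (fderiv ℝ Γ) := hγ2 0
    -- derivative of x' ↦ fderiv U (G x') w :
    have hAterm : ∀ w : Fin (n+1) → ℝ, HasFDerivAt (fun x' => fderiv ℝ U (G x') w)
        ((ContinuousLinearMap.apply ℝ ℝ w).comp ((fderiv ℝ (fderiv ℝ U) 0).comp
          ((snocCLM n).comp ((ContinuousLinearMap.id ℝ (Fin n → ℝ)).prod (fderiv ℝ Γ 0)))))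
        0 := by
      intro w
      have h1 : HasFDerivAt (fderiv ℝ U) (fderiv ℝ (fderiv ℝ U) 0) (G 0) := by
        rw [hG0]; exact (hΨu 0).hasFDerivAt
      have h2 := h1.comp 0 (hGd 0)
      have h3 := ((ContinuousLinearMap.apply ℝ ℝ w).hasFDerivAt).comp 0 h2
      exact h3.congr_of_eventuallyEq (by filter_upwards with q; rfl)
    have hBterm : HasFDerivAt (fun x' => fderiv ℝ Γ x' ej)
        ((ContinuousLinearMap.apply ℝ ℝ ej).comp (fderiv ℝ (fderiv ℝ Γ) 0)) 0 := by
      have h3 := ((ContinuousLinearMap.apply ℝ ℝ ej).hasFDerivAt).comp 0 ((hΨγ 0).hasFDerivAt)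
      exact h3.congr_of_eventuallyEq (by filter_upwards with q; rfl)
    have htot := (hAterm e).add ((hBterm.mul (hAterm eL)))
    have hfun : (fun x' => fderiv ℝ U (G x') e
        + (fderiv ℝ Γ x' ej) * (fderiv ℝ U (G x') eL)) = fun _ => (0:ℝ) := by
      funext x'
      exact hform x'
    have hz := (hasFDerivAt_const (0:ℝ) (0 : Fin n → ℝ)).unique
      (htot.congr_of_eventuallyEq (by filter_upwards with q; exact (congrFun hfun q).symm))
    have hval := congrArg (fun L => L ej) hz
    -- simplify
    have hDΓ0 : fderiv ℝ Γ 0 ej = 0 := by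
      rw [hΓder]; exact hgrad j
    have hG0ej : ((snocCLM n).comp ((ContinuousLinearMap.id ℝ (Fin n → ℝ)).prod
        (fderiv ℝ Γ 0))) ej = e := by
      simp only [ContinuousLinearMap.comp_apply, ContinuousLinearMap.prod_apply,
        ContinuousLinearMap.coe_id', id_eq, snocCLM_apply, hDΓ0]
      rw [he, hej]
      exact snoc_single j
    simp only [ContinuousLinearMap.add_apply, ContinuousLinearMap.comp_apply,
      ContinuousLinearMap.smul_apply, ContinuousLinearMap.apply_apply,
      ContinuousLinearMap.zero_apply, hG0ej, hDΓ0, smul_eq_mul, zero_mul] at hval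
    -- hval : (fderiv (fderiv U) 0 e) e + (fderiv Γ 0 ej) • ... + (fderiv U (G 0) eL) • ((fderiv (fderiv Γ) 0 ej) ej) = 0
    -- identify with pder2
    have hp2u : pder2 u (0, 0) j.castSucc j.castSucc = (fderiv ℝ (fderiv ℝ U) 0 e) e := by
      have hev : (fun x => fderiv ℝ U x e)
          = (ContinuousLinearMap.apply ℝ ℝ e) ∘ (fderiv ℝ U) := rfl
      have h3 := ((ContinuousLinearMap.apply ℝ ℝ e).hasFDerivAt).comp 0 ((hΨu 0).hasFDerivAt)
      have := h3.fderiv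
      unfold pder2
      rw [hev, this]
      rfl
    have hp2γ : pder2 γ (0, 0) j j = (fderiv ℝ (fderiv ℝ Γ) 0 ej) ej := by
      have hev : (fun x => fderiv ℝ Γ x ej)
          = (ContinuousLinearMap.apply ℝ ℝ ej) ∘ (fderiv ℝ Γ) := rfl
      have h3 := ((ContinuousLinearMap.apply ℝ ℝ ej).hasFDerivAt).comp 0 ((hΨγ 0).hasFDerivAt)
      have := h3.fderiv
      unfold pder2
      rw [hev, this]
      rfl
    have hNeq : fderiv ℝ U (G 0) eL = N := by
      rw [hG0, hUder]
      rfl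
    rw [hp2u, hp2γ]
    rw [hNeq] at hval
    linarith
  -- Step B : the norm of the gradient is N
  have hB : enorm' (fun k => pder u (0, 0) k) = N := by
    unfold enorm'
    rw [Fin.sum_univ_castSucc]
    have h1 : ∀ j : Fin n, pder u (0, 0) (Fin.castSucc j) ^ 2 = 0 := by
      intro j; rw [hA j]; ring
    rw [Finset.sum_congr rfl (fun j _ => h1 j), Finset.sum_const_zero, zero_add]
    rw [show ((fun k => pder u (0, 0) k) (Fin.last n)) = N from rfl, Real.sqrt_sq hn.le]
  -- sum of second derivatives of u
  have hE : ∑ i : Fin (n + 1), pder2 u (0, 0) i i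
      = -(N * ∑ k : Fin n, pder2 γ (0, 0) k k) + pder2 u (0, 0) (Fin.last n) (Fin.last n) := by
    rw [Fin.sum_univ_castSucc, Finset.sum_congr rfl (fun j _ => hD j),
      Finset.sum_neg_distrib, ← Finset.mul_sum]
  have hNpos : (0:ℝ) < N := hn
  have hNne : N ≠ 0 := hNpos.ne'
  -- simplify the nonlocal dot products
  have hS : (∑ i : Fin (n + 1),
        (ω (0, 0) i - β (u (0, 0)) * pder u (0, 0) i
            / (enorm' (fun k => pder u (0, 0) k)) ^ α) * pder u (0, 0) i)
      = N * (∑ i : Fin (n + 1),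
        (ω (0, 0) i - β (u (0, 0)) * pder u (0, 0) i
            / (enorm' (fun k => pder u (0, 0) k)) ^ α)
          * (pder u (0, 0) i / enorm' (fun k => pder u (0, 0) k))) := by
    rw [hB, Finset.mul_sum]
    refine Finset.sum_congr rfl fun i _ => ?_
    rw [eq_comm, mul_comm N, mul_assoc, div_mul_cancel₀ _ hNne]
  -- put everything together
  set S' := (∑ i : Fin (n + 1),
        (ω (0, 0) i - β (u (0, 0)) * pder u (0, 0) i
            / (enorm' (fun k => pder u (0, 0) k)) ^ α)
          * (pder u (0, 0) i / enorm' (fun k => pder u (0, 0) k))) with hS'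
  have hmax : max 0 (-(N * S')) = N * max 0 (-S') := by
    rw [mul_max_of_nonneg _ _ hNpos.le, mul_zero, mul_neg]
  rw [hS, hmax, hE] at heq
  rw [hB]
  have hγt : tder γ (0, 0) = -(tder u (0, 0)) / N := by
    field_simp at hC ⊢
    linarith
  rw [hγt, heq]
  field_simp
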